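/- Let α > 0, ζ ∈ ℝ, and define f₂(v) = v·₁F₂((ζ+1)/4; 3/4, 5/4; v⁴/(16α)) and f₃(v) = v²·₁F₂((ζ+2)/4; 5/4, 3/2; v⁴/(16α)). Then both f₂ and f₃ satisfy α·f'''(v) − v²·f'(v) − ζ·v·f(v) = 0 for all v ∈ ℝ. -/
import Mathlib


open Real

/-- Pochhammer symbol `(a)ₙ = a(a+1)⋯(a+n-1)`. -/
noncomputable def poch (a : ℝ) (n : ℕ) : ℝ := ∏ i ∈ Finset.range n, (a + i)

/-- The generalized hypergeometric function `₁F₂(a; b₁, b₂; z)`. -/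
noncomputable def oneF2 (a b₁ b₂ z : ℝ) : ℝ :=
  ∑' n : ℕ, poch a n * z ^ n / (poch b₁ n * poch b₂ n * (n.factorial : ℝ))



section
variable (c : ℕ → ℝ) (e : ℕ → ℕ) (A K : ℝ)

lemma summable_mono' (R : ℝ) : Summable (fun n : ℕ => A * K^n / n.factorial * R^(4*n+3)) := by
  refine ((Real.summable_pow_div_factorial (K*R^4)).mul_left (A * R^3)).congr fun n => ?_
  rw [mul_pow, ← pow_mul, pow_add]; ring

lemma nat_lin_le' (n : ℕ) : 4*n+3 ≤ 7 * 2^n := by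
  induction n with
  | zero => norm_num
  | succ n ih =>
    have h1 : 1 ≤ 2^n := Nat.one_le_two_pow
    have : 7 * 2^(n+1) = 7*2^n + 7*2^n := by ring
    omega

lemma summable_tm (hc : ∀ n, |c n| ≤ A * K^n / n.factorial)
    (he : ∀ n, e n ≤ 4*n+3) (v : ℝ) :
    Summable fun n => c n * v ^ e n := by
  set R := max |v| 1 with hR
  have hR1 : (1:ℝ) ≤ R := le_max_right _ _
  have hRv : |v| ≤ R := le_max_left _ _
  apply Summable.of_abs
  refine Summable.of_nonneg_of_le (fun n => abs_nonneg _) (fun n => ?_) (summable_mono' A K R)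
  have hnn : (0:ℝ) ≤ A * K^n / n.factorial := (abs_nonneg _).trans (hc n)
  calc |c n * v ^ e n| = |c n| * |v|^(e n) := by rw [abs_mul, abs_pow]
    _ ≤ (A*K^n/n.factorial) * R^(4*n+3) := by
        apply mul_le_mul (hc n) ?_ (by positivity) hnn
        exact (pow_le_pow_left₀ (abs_nonneg v) hRv _).trans (pow_le_pow_right₀ hR1 (he n))

lemma hasDerivAt_tm (hK : 0 ≤ K)
    (hc : ∀ n, |c n| ≤ A * K ^ n / n.factorial) (he : ∀ n, e n ≤ 4*n+3) (v : ℝ) :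
    HasDerivAt (fun y : ℝ => ∑' n, c n * y ^ e n)
      (∑' n, c n * (e n : ℝ) * v ^ (e n - 1)) v := by
  have hA : 0 ≤ A := by
    have := (abs_nonneg (c 0)).trans (hc 0); simpa using this
  set R := |v| + 1 with hRdef
  have hR0 : (0:ℝ) < R := by positivity
  have hR1 : (1:ℝ) ≤ R := by rw [hRdef]; linarith [abs_nonneg v]
  have hu : Summable (fun n : ℕ => (A*7) * (2*K)^n / n.factorial * R^(4*n+3)) :=
    summable_mono' _ _ _
  refine hasDerivAt_tsum_of_isPreconnected hu Metric.isOpen_ball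
    (convex_ball (0:ℝ) R).isPreconnected
    (g := fun n y => c n * y ^ e n) (g' := fun n y => c n * (e n : ℝ) * y ^ (e n - 1))
    (y₀ := 0)
    (fun n y _ => ?_) (fun n y hy => ?_) ?_ ?_ ?_
  · simpa [mul_assoc] using (hasDerivAt_pow (e n) y).const_mul (c n)
  · have hy' : |y| ≤ R := by
      rw [Metric.mem_ball, dist_zero_right, Real.norm_eq_abs] at hy; linarith
    have hnn : (0:ℝ) ≤ A * K^n / n.factorial := (abs_nonneg _).trans (hc n)
    have hb2 : ((e n : ℝ)) ≤ 7 * 2^n := by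
      calc ((e n : ℝ)) ≤ ((4*n+3 : ℕ) : ℝ) := by exact_mod_cast he n
        _ ≤ ((7 * 2^n : ℕ) : ℝ) := by exact_mod_cast nat_lin_le' n
        _ = 7 * 2^n := by push_cast; ring
    have hb3 : |y|^(e n - 1) ≤ R^(4*n+3) :=
      (pow_le_pow_left₀ (abs_nonneg y) hy' _).trans
        (pow_le_pow_right₀ hR1 (by have := he n; omega))
    calc ‖c n * (e n : ℝ) * y ^ (e n - 1)‖
        = |c n| * (e n : ℝ) * |y|^(e n - 1) := by
          rw [Real.norm_eq_abs, abs_mul, abs_mul, abs_pow, Nat.abs_cast]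
      _ ≤ ((A*K^n/n.factorial) * (7 * 2^n)) * R^(4*n+3) := by
          apply mul_le_mul (mul_le_mul (hc n) hb2 (Nat.cast_nonneg _) hnn) hb3
            (by positivity) (by positivity)
      _ = (A*7) * (2*K)^n / n.factorial * R^(4*n+3) := by
          rw [mul_pow]; ring
  · exact Metric.mem_ball_self hR0
  · have hs : Summable (fun n : ℕ => A * K^n / n.factorial) :=
      ((Real.summable_pow_div_factorial K).mul_left A).congr (fun n => by ring)
    refine Summable.of_abs (Summable.of_nonneg_of_le (fun n => abs_nonneg _) (fun n => ?_) hs)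
    calc |c n * (0:ℝ) ^ e n| = |c n| * |(0:ℝ)|^(e n) := by rw [abs_mul, abs_pow]
      _ ≤ (A*K^n/n.factorial) * 1 := by
          apply mul_le_mul (hc n) ?_ (by positivity) ((abs_nonneg _).trans (hc n))
          exact pow_le_one₀ (abs_nonneg _) (by simp)
      _ = A*K^n/n.factorial := by ring
  · rw [Metric.mem_ball, dist_zero_right, Real.norm_eq_abs]; linarith

end




lemma poch_succ (a : ℝ) (n : ℕ) : poch a (n+1) = poch a n * (a + n) := by
  unfold poch; rw [Finset.prod_range_succ]

lemma poch_pos {b : ℝ} (hb : 0 < b) (n : ℕ) : 0 < poch b n := by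
  unfold poch
  exact Finset.prod_pos (fun i _ => by positivity)

lemma poch_ge {b : ℝ} (hb : 3/4 ≤ b) (n : ℕ) :
    (3/4 : ℝ)^n * n.factorial ≤ poch b n := by
  induction n with
  | zero => simp [poch]
  | succ n ih =>
    rw [poch_succ, pow_succ, Nat.factorial_succ]
    push_cast
    have hn : (0:ℝ) ≤ n := Nat.cast_nonneg n
    have h1 : (3/4 : ℝ) * ((n:ℝ)+1) ≤ b + n := by linarith
    have h2 : (0:ℝ) < poch b n := poch_pos (by linarith) n
    calc (3/4:ℝ)^n * (3/4) * (((n:ℝ)+1) * n.factorial)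
        = ((3/4:ℝ)^n * n.factorial) * ((3/4) * ((n:ℝ)+1)) := by ring
      _ ≤ poch b n * (b + n) := by
          apply mul_le_mul ih h1 (by positivity) h2.le

lemma poch_abs_le (a : ℝ) (n : ℕ) : |poch a n| ≤ (|a|+1)^n * n.factorial := by
  induction n with
  | zero => simp [poch]
  | succ n ih =>
    rw [poch_succ, abs_mul, pow_succ, Nat.factorial_succ]
    push_cast
    have hn : (0:ℝ) ≤ n := Nat.cast_nonneg n
    have h1 : |a + (n:ℝ)| ≤ (|a|+1) * ((n:ℝ)+1) := by
      calc |a + (n:ℝ)| ≤ |a| + n := by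
            simpa using (abs_add_le a (n:ℝ)).trans (by simp [abs_of_nonneg hn])
        _ ≤ (|a|+1) * ((n:ℝ)+1) := by nlinarith [abs_nonneg a]
    calc |poch a n| * |a + (n:ℝ)| ≤ ((|a|+1)^n * n.factorial) * ((|a|+1) * ((n:ℝ)+1)) :=
          mul_le_mul ih h1 (abs_nonneg _) (by positivity)
      _ = (|a|+1)^n * (|a|+1) * (((n:ℝ)+1) * n.factorial) := by ring

/-- Coefficient bound for the hypergeometric coefficients. -/
lemma coeff_bound (α a b₁ b₂ : ℝ) (hα : 0 < α) (hb₁ : 3/4 ≤ b₁) (hb₂ : 3/4 ≤ b₂) (n : ℕ) :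
    |poch a n / (poch b₁ n * poch b₂ n * n.factorial * (16*α)^n)|
      ≤ 1 * ((|a|+1)/(9*α))^n / n.factorial := by
  have hp1 : (0:ℝ) < poch b₁ n := poch_pos (by linarith) n
  have hp2 : (0:ℝ) < poch b₂ n := poch_pos (by linarith) n
  have hfac : (0:ℝ) < (n.factorial : ℝ) := by exact_mod_cast n.factorial_pos
  have hq : (0:ℝ) < (16*α)^n := by positivity
  have hD : (0:ℝ) < poch b₁ n * poch b₂ n * n.factorial * (16*α)^n := by positivity
  have hnum : |poch a n| ≤ (|a|+1)^n * n.factorial := poch_abs_le a n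
  have hden : ((3/4:ℝ)^n * n.factorial) * ((3/4:ℝ)^n * n.factorial) * n.factorial * (16*α)^n
      ≤ poch b₁ n * poch b₂ n * n.factorial * (16*α)^n := by
    have g1 := poch_ge hb₁ n
    have g2 := poch_ge hb₂ n
    have h34 : (0:ℝ) ≤ (3/4:ℝ)^n * n.factorial := by positivity
    apply mul_le_mul_of_nonneg_right _ hq.le
    apply mul_le_mul_of_nonneg_right _ hfac.le
    exact mul_le_mul g1 g2 h34 hp1.le
  calc |poch a n / (poch b₁ n * poch b₂ n * n.factorial * (16*α)^n)|
      = |poch a n| / (poch b₁ n * poch b₂ n * n.factorial * (16*α)^n) := by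
        rw [abs_div, abs_of_pos hD]
    _ ≤ ((|a|+1)^n * n.factorial) /
        (((3/4:ℝ)^n * n.factorial) * ((3/4:ℝ)^n * n.factorial) * n.factorial * (16*α)^n) :=
        div_le_div₀ (by positivity) hnum (by positivity) hden
    _ = ((|a|+1)/(9*α))^n / ((n.factorial : ℝ) * n.factorial) := by
        have e1 : ((3/4:ℝ))^n * ((3/4:ℝ))^n * (16*α)^n = (9*α)^n := by
          rw [← mul_pow, ← mul_pow]; congr 1; ring
        rw [div_pow (|a|+1) (9*α) n, div_div]
        rw [div_eq_div_iff (by positivity) (by positivity)]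
        linear_combination (-(|a|+1)^n * (n.factorial:ℝ) * n.factorial * n.factorial) * e1
    _ ≤ 1 * ((|a|+1)/(9*α))^n / n.factorial := by
        rw [one_mul]
        apply div_le_div_of_nonneg_left (by positivity) hfac
        nlinarith [hfac, (by exact_mod_cast Nat.one_le_iff_ne_zero.mpr n.factorial_ne_zero : (1:ℝ) ≤ n.factorial)]

lemma nat_lin_le (n : ℕ) : 4*n+3 ≤ 7 * 2^n := by
  induction n with
  | zero => norm_num
  | succ n ih =>
    have h1 : 1 ≤ 2^n := Nat.one_le_two_pow
    have : 7 * 2^(n+1) = 7*2^n + 7*2^n := by ring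
    omega

lemma bound_step (c : ℕ → ℝ) (j : ℕ → ℕ) (A K : ℝ) (hK : 0 ≤ K)
    (hc : ∀ n, |c n| ≤ A * K^n / n.factorial) (hj : ∀ n, j n ≤ 4*n+3) :
    ∀ n, |c n * (j n : ℝ)| ≤ (7*A) * (2*K)^n / n.factorial := by
  intro n
  have hnn : (0:ℝ) ≤ A * K^n / n.factorial := (abs_nonneg _).trans (hc n)
  have hlin : (4*n+3 : ℕ) ≤ 7 * 2^n := nat_lin_le n
  have hb2 : ((j n : ℝ)) ≤ 7 * 2^n := by
    calc ((j n : ℝ)) ≤ ((4*n+3 : ℕ) : ℝ) := by exact_mod_cast hj n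
      _ ≤ ((7 * 2^n : ℕ) : ℝ) := by exact_mod_cast hlin
      _ = 7 * 2^n := by push_cast; ring
  calc |c n * (j n : ℝ)| = |c n| * (j n : ℝ) := by rw [abs_mul, Nat.abs_cast]
    _ ≤ (A*K^n/n.factorial) * (7*2^n) :=
        mul_le_mul (hc n) hb2 (Nat.cast_nonneg _) hnn
    _ = (7*A) * (2*K)^n / n.factorial := by rw [mul_pow]; ring

lemma ode_master (α ζ : ℝ) (c : ℕ → ℝ) (m : ℕ) (hm1 : 1 ≤ m) (hm2 : m ≤ 2)
    (K : ℝ) (hK : 0 ≤ K) (hc : ∀ n, |c n| ≤ 1 * K^n / n.factorial)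
    (hrec : ∀ n : ℕ, α * (4*(n:ℝ)+(m:ℝ)+4) * (4*(n:ℝ)+(m:ℝ)+3) * (4*(n:ℝ)+(m:ℝ)+2) * c (n+1)
       = (ζ + (4*(n:ℝ)+(m:ℝ))) * c n)
    (f : ℝ → ℝ) (hf : ∀ v, f v = ∑' n, c n * v ^ (4*n+m)) (v : ℝ) :
    α * deriv (deriv (deriv f)) v - v ^ 2 * deriv f v - ζ * v * f v = 0 := by
  obtain ⟨m', rfl⟩ : ∃ m', m = m'+1 := ⟨m-1, by omega⟩
  have he0 : ∀ n, 4*n+(m'+1) ≤ 4*n+3 := fun n => by omega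
  have he1 : ∀ n, 4*n+(m'+1)-1 ≤ 4*n+3 := fun n => by omega
  have he2 : ∀ n, 4*n+(m'+1)-1-1 ≤ 4*n+3 := fun n => by omega
  have he3 : ∀ n, 4*n+(m'+1)-1-1-1 ≤ 4*n+3 := fun n => by omega
  -- coefficient functions
  set c1 : ℕ → ℝ := fun n => c n * ((4*n+(m'+1) : ℕ) : ℝ) with hc1def
  set c2 : ℕ → ℝ := fun n => c1 n * ((4*n+(m'+1)-1 : ℕ) : ℝ) with hc2def
  set c3 : ℕ → ℝ := fun n => c2 n * ((4*n+(m'+1)-1-1 : ℕ) : ℝ) with hc3def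
  have hb1 : ∀ n, |c1 n| ≤ (7*1) * (2*K)^n / n.factorial :=
    bound_step c _ 1 K hK hc he0
  have hb2 : ∀ n, |c2 n| ≤ (7*(7*1)) * (2*(2*K))^n / n.factorial :=
    bound_step c1 _ (7*1) (2*K) (by linarith) hb1 he1
  have hb3 : ∀ n, |c3 n| ≤ (7*(7*(7*1))) * (2*(2*(2*K)))^n / n.factorial :=
    bound_step c2 _ (7*(7*1)) (2*(2*K)) (by linarith) hb2 he2
  -- derivatives
  have hffun : f = fun y : ℝ => ∑' n, c n * y ^ (4*n+(m'+1)) := funext hf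
  have hd1 : deriv f = fun w : ℝ => ∑' n, c1 n * w ^ (4*n+(m'+1)-1) := by
    funext w
    rw [hffun]
    exact (hasDerivAt_tm c _ 1 K hK hc he0 w).deriv
  have hd2 : deriv (deriv f) = fun w : ℝ => ∑' n, c2 n * w ^ (4*n+(m'+1)-1-1) := by
    funext w
    rw [hd1]
    exact (hasDerivAt_tm c1 _ (7*1) (2*K) (by linarith) hb1 he1 w).deriv
  have hd3 : deriv (deriv (deriv f)) v = ∑' n, c3 n * v ^ (4*n+(m'+1)-1-1-1) := by
    rw [hd2]
    exact (hasDerivAt_tm c2 _ (7*(7*1)) (2*(2*K)) (by linarith) hb2 he2 v).deriv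
  -- summabilities
  have S0 : Summable fun n => c n * v ^ (4*n+(m'+1)) := summable_tm c _ 1 K hc he0 v
  have S1 : Summable fun n => c1 n * v ^ (4*n+(m'+1)-1) := summable_tm c1 _ _ _ hb1 he1 v
  have S3 : Summable fun n => c3 n * v ^ (4*n+(m'+1)-1-1-1) := summable_tm c3 _ _ _ hb3 he3 v
  rw [hd3, hd1, hf v, ← tsum_mul_left (a := α), ← tsum_mul_left (a := v^2),
    ← tsum_mul_left (a := ζ*v)]
  rw [Summable.tsum_eq_zero_add (S3.mul_left α)]
  have hz : α * (c3 0 * v ^ (4*0+(m'+1)-1-1-1)) = 0 := by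
    have h0 : m' - 1 = 0 := by omega
    simp [hc3def, h0]
  rw [hz, zero_add]
  have Ss : Summable fun n => α * (c3 (n+1) * v ^ (4*(n+1)+(m'+1)-1-1-1)) :=
    (summable_nat_add_iff 1).mpr (S3.mul_left α)
  rw [← Summable.tsum_sub Ss (S1.mul_left (v^2)), ← Summable.tsum_sub (Ss.sub (S1.mul_left (v^2))) (S0.mul_left (ζ*v))]
  have hterm : ∀ n : ℕ,
      α * (c3 (n+1) * v ^ (4*(n+1)+(m'+1)-1-1-1))
      - v^2 * (c1 n * v ^ (4*n+(m'+1)-1))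
      - ζ*v * (c n * v ^ (4*n+(m'+1))) = 0 := by
    intro n
    have E1 : 4*(n+1)+(m'+1)-1-1-1 = 4*n+m'+2 := by omega
    have E2 : 4*(n+1)+(m'+1) = 4*n+m'+5 := by omega
    have E3 : 4*(n+1)+(m'+1)-1 = 4*n+m'+4 := by omega
    have E4 : 4*(n+1)+(m'+1)-1-1 = 4*n+m'+3 := by omega
    have E5 : 4*n+(m'+1)-1 = 4*n+m' := by omega
    have E6 : 4*n+(m'+1) = 4*n+m'+1 := by omega
    simp only [hc1def, hc2def, hc3def, E1, E2, E3, E4, E5, E6]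
    have hr := hrec n
    push_cast at hr ⊢
    linear_combination (v^(4*n+m'+2)) * hr
  calc ∑' n, (α * (c3 (n+1) * v ^ (4*(n+1)+(m'+1)-1-1-1))
      - v^2 * (c1 n * v ^ (4*n+(m'+1)-1))
      - ζ*v * (c n * v ^ (4*n+(m'+1))))
      = ∑' _ : ℕ, (0:ℝ) := tsum_congr hterm
    _ = 0 := tsum_zero


theorem stmt8 (α ζ : ℝ) (hα : 0 < α) (f₂ f₃ : ℝ → ℝ)
    (hf₂ : ∀ v : ℝ, f₂ v = v * oneF2 ((ζ + 1) / 4) (3 / 4) (5 / 4) (v ^ 4 / (16 * α)))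
    (hf₃ : ∀ v : ℝ, f₃ v = v ^ 2 * oneF2 ((ζ + 2) / 4) (5 / 4) (3 / 2) (v ^ 4 / (16 * α))) :
    (∀ v : ℝ,
      α * deriv (deriv (deriv f₂)) v - v ^ 2 * deriv f₂ v - ζ * v * f₂ v = 0) ∧
    (∀ v : ℝ,
      α * deriv (deriv (deriv f₃)) v - v ^ 2 * deriv f₃ v - ζ * v * f₃ v = 0) := by
  have hfac : ∀ n : ℕ, (0:ℝ) < n.factorial := fun n => by exact_mod_cast n.factorial_pos
  constructor
  · set a := (ζ+1)/4 with ha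
    set c : ℕ → ℝ := fun n =>
      poch a n / (poch (3/4) n * poch (5/4) n * n.factorial * (16*α)^n) with hcdef
    intro v
    refine ode_master α ζ c 1 (by norm_num) (by norm_num) ((|a|+1)/(9*α)) (by positivity)
      (fun n => coeff_bound α a (3/4) (5/4) hα (by norm_num) (by norm_num) n) ?_ f₂ ?_ v
    · intro n
      have hp1 := poch_pos (show (0:ℝ) < 3/4 by norm_num) n
      have hp2 := poch_pos (show (0:ℝ) < 5/4 by norm_num) n
      have hq : (0:ℝ) < (16*α)^n := by positivity
      have hn1 : (0:ℝ) < (3/4:ℝ) + n := by positivity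
      have hn2 : (0:ℝ) < (5/4:ℝ) + n := by positivity
      have hn3 : (0:ℝ) < (n:ℝ)+1 := by positivity
      have hF := hfac n
      simp only [hcdef, poch_succ, pow_succ, Nat.factorial_succ, ha]
      push_cast
      field_simp
      ring
    · intro w
      rw [hf₂ w, oneF2, ← tsum_mul_left]
      refine tsum_congr fun n => ?_
      have h4 : (w^4/(16*α))^n = w^(4*n) / (16*α)^n := by rw [div_pow, ← pow_mul]
      have hp1 := poch_pos (show (0:ℝ) < 3/4 by norm_num) n
      have hp2 := poch_pos (show (0:ℝ) < 5/4 by norm_num) n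
      have hq : (0:ℝ) < (16*α)^n := by positivity
      have hF := hfac n
      rw [h4]
      simp only [hcdef]
      field_simp
      ring
  · set a := (ζ+2)/4 with ha
    set c : ℕ → ℝ := fun n =>
      poch a n / (poch (5/4) n * poch (3/2) n * n.factorial * (16*α)^n) with hcdef
    intro v
    refine ode_master α ζ c 2 (by norm_num) (by norm_num) ((|a|+1)/(9*α)) (by positivity)
      (fun n => coeff_bound α a (5/4) (3/2) hα (by norm_num) (by norm_num) n) ?_ f₃ ?_ v
    · intro n
      have hp1 := poch_pos (show (0:ℝ) < 5/4 by norm_num) n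
      have hp2 := poch_pos (show (0:ℝ) < 3/2 by norm_num) n
      have hq : (0:ℝ) < (16*α)^n := by positivity
      have hn1 : (0:ℝ) < (5/4:ℝ) + n := by positivity
      have hn2 : (0:ℝ) < (3/2:ℝ) + n := by positivity
      have hn3 : (0:ℝ) < (n:ℝ)+1 := by positivity
      have hF := hfac n
      simp only [hcdef, poch_succ, pow_succ, Nat.factorial_succ, ha]
      push_cast
      field_simp
      ring
    · intro w
      rw [hf₃ w, oneF2, ← tsum_mul_left]
      refine tsum_congr fun n => ?_
      have h4 : (w^4/(16*α))^n = w^(4*n) / (16*α)^n := by rw [div_pow, ← pow_mul]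
      have hp1 := poch_pos (show (0:ℝ) < 5/4 by norm_num) n
      have hp2 := poch_pos (show (0:ℝ) < 3/2 by norm_num) n
      have hq : (0:ℝ) < (16*α)^n := by positivity
      have hF := hfac n
      rw [h4]
      simp only [hcdef]
      field_simp
      ring
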